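/- Let G(0),...,G(k−1) be a sequence of B-connected undirected graphs with self-loops on n nodes satisfying the constant-degree assumption (d_i(t) ∈ {1, d_i}). Then the weighted variance V'(x(t)) = Σ_i d_i (x_i(t) − x̄)^2 of the equal-neighbor iteration satisfies V'(x((m+1)B)) ≤ (1 − 1/(2n^3)) V'(x(mB)) for every integer m ≥ 0. -/

import Mathlib

open Finset

namespace BVC


variable {Nn : ℕ}

lemma pair_sum_identity (s : Finset (Fin Nn)) (f : Fin Nn → ℝ) :
    ∑ j ∈ s, ∑ l ∈ s, (f j - f l) ^ 2
      = 2 * (s.card : ℝ) * (∑ j ∈ s, f j ^ 2) - 2 * (∑ j ∈ s, f j) ^ 2 := by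
  have h1 : ∀ j ∈ s, ∑ l ∈ s, (f j - f l) ^ 2
      = (s.card : ℝ) * f j ^ 2 - 2 * f j * (∑ l ∈ s, f l) + ∑ l ∈ s, f l ^ 2 := by
    intro j _
    have h2 : ∀ l ∈ s, (f j - f l) ^ 2 = f j ^ 2 - 2 * f j * f l + f l ^ 2 :=
      fun l _ => by ring
    rw [sum_congr rfl h2, sum_add_distrib, sum_sub_distrib, sum_const, nsmul_eq_mul,
      ← mul_sum]
  rw [sum_congr rfl h1, sum_add_distrib, sum_sub_distrib, sum_const, nsmul_eq_mul,
    ← sum_mul, ← mul_sum,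
    show ∑ x ∈ s, 2 * f x = 2 * ∑ x ∈ s, f x from (mul_sum _ _ _).symm]
  ring

lemma cs_div (s : Finset (Fin Nn)) (hne : s.Nonempty) (f : Fin Nn → ℝ) :
    (∑ j ∈ s, f j) ^ 2 / (s.card : ℝ) ≤ ∑ j ∈ s, f j ^ 2 := by
  have hc : (0 : ℝ) < (s.card : ℝ) := by
    exact_mod_cast Finset.card_pos.mpr hne
  rw [div_le_iff₀ hc]
  calc (∑ j ∈ s, f j) ^ 2 ≤ (s.card : ℝ) * ∑ j ∈ s, f j ^ 2 := by
        exact sq_sum_le_card_mul_sum_sq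
    _ = (∑ j ∈ s, f j ^ 2) * (s.card : ℝ) := by ring

lemma sum_nbhd (A : Fin Nn → Finset (Fin Nn)) (hsym : ∀ i j, j ∈ A i ↔ i ∈ A j)
    (F : Fin Nn → ℝ) :
    ∑ i, ∑ j ∈ A i, F j = ∑ j, ((A j).card : ℝ) * F j := by
  have h1 : ∀ i : Fin Nn, ∑ j ∈ A i, F j = ∑ j, if j ∈ A i then F j else 0 := by
    intro i; rw [Finset.sum_ite_mem, Finset.univ_inter]
  simp_rw [h1]
  rw [Finset.sum_comm]
  refine sum_congr rfl fun j _ => ?_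
  have h2 : ∀ i : Fin Nn, (if j ∈ A i then F j else 0) = (if i ∈ A j then F j else 0) :=
    fun i => if_congr (hsym i j) rfl rfl
  rw [sum_congr rfl fun i _ => h2 i, Finset.sum_ite_mem, Finset.univ_inter, sum_const,
    nsmul_eq_mul]

lemma step_identity (A : Fin Nn → Finset (Fin Nn)) (d : Fin Nn → ℕ)
    (hsym : ∀ i j, j ∈ A i ↔ i ∈ A j) (hself : ∀ i, i ∈ A i)
    (hdeg : ∀ i, (A i).card = d i ∨ (A i).card = 1) (u : Fin Nn → ℝ) :
    ∑ i, ((∑ j ∈ A i, u j ^ 2) - (∑ j ∈ A i, u j) ^ 2 / ((A i).card : ℝ))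
      = ∑ i, (d i : ℝ) * u i ^ 2
        - ∑ i, (d i : ℝ) * ((∑ j ∈ A i, u j) / ((A i).card : ℝ)) ^ 2 := by
  have hnb : ∑ i, ∑ j ∈ A i, (u j) ^ 2 = ∑ i, ((A i).card : ℝ) * u i ^ 2 :=
    sum_nbhd A hsym (fun j => u j ^ 2)
  rw [sum_sub_distrib, hnb, ← sum_sub_distrib, ← sum_sub_distrib]
  refine sum_congr rfl fun i _ => ?_
  rcases hdeg i with h | h
  · have hc : (0:ℝ) < ((A i).card : ℝ) := by
      exact_mod_cast Finset.card_pos.mpr ⟨i, hself i⟩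
    rw [← h]
    field_simp
  · have : A i = {i} := by
      rcases Finset.card_eq_one.mp h with ⟨a, ha⟩
      have : i ∈ ({a} : Finset (Fin Nn)) := ha ▸ hself i
      rw [Finset.mem_singleton] at this
      rw [ha, this]
    rw [this]
    simp

/-- Core charging lemma. -/

lemma core_charge (s : Finset (Fin Nn)) (hne : s.Nonempty)
    (u : Fin Nn → ℝ) (r : Fin Nn → ℕ) (w : ℕ → ℝ) (hw : Monotone w)
    (K : Finset ℕ)
    (H1 : ∀ k ∈ K, ∀ a, r a ≤ k → u a ≤ w k)
    (H2 : ∀ k ∈ K, ∀ b, k < r b → w (k + 1) ≤ u b)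
    (H3 : ∀ k ∈ K, ∃ a ∈ s, r a ≤ k)
    (H4 : ∀ k ∈ K, ∃ b ∈ s, k < r b) :
    (1 / 2) * ∑ k ∈ K, (w (k + 1) - w k) ^ 2
      ≤ (∑ j ∈ s, u j ^ 2) - (∑ j ∈ s, u j) ^ 2 / (s.card : ℝ) := by
  classical
  have hcs : (∑ j ∈ s, u j) ^ 2 / (s.card : ℝ) ≤ ∑ j ∈ s, u j ^ 2 := cs_div s hne u
  rcases K.eq_empty_or_nonempty with hK | hK
  · rw [hK]
    simpa using sub_nonneg.mpr hcs
  have hc2 : 2 ≤ s.card := by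
    obtain ⟨k0, hk0⟩ := hK
    obtain ⟨a, ha, hra⟩ := H3 k0 hk0
    obtain ⟨b, hb, hrb⟩ := H4 k0 hk0
    have hab : a ≠ b := by
      intro h; subst h; omega
    exact Finset.one_lt_card.mpr ⟨a, ha, b, hb, hab⟩
  have hcpos : (0:ℝ) < (s.card : ℝ) := by
    have : 0 < s.card := by omega
    exact_mod_cast this
  have hgap0 : ∀ k, (0:ℝ) ≤ w (k+1) - w k := fun k => sub_nonneg.mpr (hw (Nat.le_succ k))
  -- one-directional pair bound
  have key : ∀ j ∈ s, ∀ l ∈ s,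
      ∑ k ∈ K.filter (fun k => r j ≤ k ∧ k < r l), (w (k+1) - w k) ^ 2
        ≤ (u j - u l) ^ 2 := by
    intro j hj l hl
    set K' := K.filter (fun k => r j ≤ k ∧ k < r l) with hK'
    rcases K'.eq_empty_or_nonempty with h' | h'
    · rw [h', sum_empty]; positivity
    · set k1 := K'.min' h' with hk1def
      set k2 := K'.max' h' with hk2def
      have hk1K' : k1 ∈ K' := K'.min'_mem h'
      have hk2K' : k2 ∈ K' := K'.max'_mem h'
      have hk1 : k1 ∈ K ∧ (r j ≤ k1 ∧ k1 < r l) := by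
        simpa [hK', mem_filter] using hk1K'
      have hk2 : k2 ∈ K ∧ (r j ≤ k2 ∧ k2 < r l) := by
        simpa [hK', mem_filter] using hk2K'
      have hju : u j ≤ w k1 := H1 k1 hk1.1 j hk1.2.1
      have hlu : w (k2 + 1) ≤ u l := H2 k2 hk2.1 l hk2.2.2
      have h12 : k1 ≤ k2 := K'.min'_le _ hk2K'
      have hsub : K' ⊆ Finset.Ico k1 (k2+1) := by
        intro k hk; rw [Finset.mem_Ico]
        exact ⟨K'.min'_le _ hk, Nat.lt_succ_of_le (K'.le_max' _ hk)⟩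
      have htel : ∑ k ∈ Finset.Ico k1 (k2+1), (w (k+1) - w k) = w (k2+1) - w k1 := by
        rw [Finset.sum_Ico_eq_sum_range]
        have h1 : ∀ i2 ∈ Finset.range (k2 + 1 - k1),
            (w ((k1 + i2) + 1) - w (k1 + i2))
            = (fun i3 => w (k1 + i3)) (i2+1) - (fun i3 => w (k1 + i3)) i2 := by
          intro i2 _
          have h3 : k1 + i2 + 1 = k1 + (i2+1) := by omega
          simp only [h3]
        rw [sum_congr rfl h1, Finset.sum_range_sub (fun i3 => w (k1 + i3))]
        have h4 : k1 + (k2 + 1 - k1) = k2 + 1 := by omega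
        rw [h4]
        simp
      have hsumle : ∑ k ∈ K', (w (k+1) - w k) ≤ u l - u j := by
        calc ∑ k ∈ K', (w (k+1) - w k)
            ≤ ∑ k ∈ Finset.Ico k1 (k2+1), (w (k+1) - w k) :=
              Finset.sum_le_sum_of_subset_of_nonneg hsub (fun k _ _ => hgap0 k)
          _ = w (k2+1) - w k1 := htel
          _ ≤ u l - u j := sub_le_sub hlu hju
      have hsum0 : (0:ℝ) ≤ ∑ k ∈ K', (w (k+1) - w k) := sum_nonneg fun k _ => hgap0 k
      calc ∑ k ∈ K', (w (k+1) - w k) ^ 2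
          ≤ (∑ k ∈ K', (w (k+1) - w k)) ^ 2 :=
            Finset.sum_sq_le_sq_sum_of_nonneg fun k _ => hgap0 k
        _ ≤ (u l - u j) ^ 2 := pow_le_pow_left₀ hsum0 hsumle 2
        _ = (u j - u l) ^ 2 := by ring
  -- two-directional pair bound
  have key2 : ∀ j ∈ s, ∀ l ∈ s,
      (∑ k ∈ K.filter (fun k => r j ≤ k ∧ k < r l), (w (k+1) - w k) ^ 2)
      + (∑ k ∈ K.filter (fun k => r l ≤ k ∧ k < r j), (w (k+1) - w k) ^ 2)
        ≤ (u j - u l) ^ 2 := by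
    intro j hj l hl
    rcases le_or_gt (r l) (r j) with h | h
    · have he : K.filter (fun k => r j ≤ k ∧ k < r l) = ∅ := by
        apply Finset.filter_eq_empty_iff.mpr
        intro k _
        rintro ⟨h1, h2⟩; omega
      rw [he, sum_empty, zero_add]
      calc (∑ k ∈ K.filter (fun k => r l ≤ k ∧ k < r j), (w (k+1) - w k) ^ 2)
          ≤ (u l - u j)^2 := key l hl j hj
        _ = (u j - u l)^2 := by ring
    · have he : K.filter (fun k => r l ≤ k ∧ k < r j) = ∅ := by
        apply Finset.filter_eq_empty_iff.mpr
        intro k _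
        rintro ⟨h1, h2⟩; omega
      rw [he, sum_empty, add_zero]
      exact key j hj l hl
  -- the double-counted sum A
  have hA : ∀ (P : ℕ → ℕ → Prop) [DecidablePred fun p : ℕ × ℕ => True],
      True := fun _ _ => trivial
  set g : ℕ → ℝ := fun k => (w (k+1) - w k) ^ 2 with hg
  set a : ℕ → ℕ := fun k => (s.filter (fun j => r j ≤ k)).card with ha
  set b : ℕ → ℕ := fun k => (s.filter (fun l => k < r l)).card with hb
  have hcount : ∑ j ∈ s, ∑ l ∈ s,
      ∑ k ∈ K.filter (fun k => r j ≤ k ∧ k < r l), g k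
      = ∑ k ∈ K, (a k : ℝ) * (b k : ℝ) * g k := by
    have step1 : ∀ j ∈ s, ∑ l ∈ s, ∑ k ∈ K.filter (fun k => r j ≤ k ∧ k < r l), g k
        = ∑ k ∈ K, ∑ l ∈ s, (if r j ≤ k ∧ k < r l then g k else 0) := by
      intro j _
      rw [Finset.sum_comm]
      exact sum_congr rfl fun l _ => Finset.sum_filter _ _
    rw [sum_congr rfl step1, Finset.sum_comm]
    refine sum_congr rfl fun k hk => ?_
    have step2 : ∀ j ∈ s, ∑ l ∈ s, (if r j ≤ k ∧ k < r l then g k else 0)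
        = (if r j ≤ k then (b k : ℝ) * g k else 0) := by
      intro j _
      by_cases hp : r j ≤ k
      · simp only [hp, true_and, if_true]
        rw [← Finset.sum_filter, sum_const, nsmul_eq_mul]
      · simp [hp]
    rw [sum_congr rfl step2, ← Finset.sum_filter, sum_const, nsmul_eq_mul]
    ring
  have habk : ∀ k ∈ K, ((s.card : ℝ) - 1) * g k ≤ (a k : ℝ) * (b k : ℝ) * g k := by
    intro k hk
    have hsum : a k + b k = s.card := by
      have hcongr : s.filter (fun l => k < r l) = s.filter (fun l => ¬ (r l ≤ k)) := by
        apply Finset.filter_congr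
        intro l _
        simp [Nat.not_le]
      simp only [ha, hb]
      rw [hcongr]
      exact Finset.card_filter_add_card_filter_not _
    have ha1 : 1 ≤ a k := by
      obtain ⟨a0, ha0, hra0⟩ := H3 k hk
      have : a0 ∈ s.filter (fun j => r j ≤ k) := Finset.mem_filter.mpr ⟨ha0, hra0⟩
      exact Finset.card_pos.mpr ⟨a0, this⟩
    have hb1 : 1 ≤ b k := by
      obtain ⟨b0, hb0, hrb0⟩ := H4 k hk
      have : b0 ∈ s.filter (fun l => k < r l) := Finset.mem_filter.mpr ⟨hb0, hrb0⟩
      exact Finset.card_pos.mpr ⟨b0, this⟩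
    have : ((s.card : ℝ) - 1) ≤ (a k : ℝ) * (b k : ℝ) := by
      have h1 : (1:ℝ) ≤ (a k : ℝ) := by exact_mod_cast ha1
      have h2 : (1:ℝ) ≤ (b k : ℝ) := by exact_mod_cast hb1
      have h3 : (a k : ℝ) + (b k : ℝ) = (s.card : ℝ) := by exact_mod_cast hsum
      nlinarith
    have hgk2 : (0:ℝ) ≤ g k := by simp only [hg]; positivity
    exact mul_le_mul_of_nonneg_right this hgk2
  -- combine
  have hP : ∑ j ∈ s, ∑ l ∈ s, (u j - u l) ^ 2
      = 2 * (s.card : ℝ) * (∑ j ∈ s, u j ^ 2) - 2 * (∑ j ∈ s, u j) ^ 2 :=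
    pair_sum_identity s u
  have h2A : 2 * ∑ k ∈ K, (a k : ℝ) * (b k : ℝ) * g k
      ≤ ∑ j ∈ s, ∑ l ∈ s, (u j - u l) ^ 2 := by
    have hA' : ∑ j ∈ s, ∑ l ∈ s,
        ∑ k ∈ K.filter (fun k => r l ≤ k ∧ k < r j), g k
        = ∑ j ∈ s, ∑ l ∈ s, ∑ k ∈ K.filter (fun k => r j ≤ k ∧ k < r l), g k :=
      Finset.sum_comm
    calc 2 * ∑ k ∈ K, (a k : ℝ) * (b k : ℝ) * g k
        = (∑ j ∈ s, ∑ l ∈ s, ∑ k ∈ K.filter (fun k => r j ≤ k ∧ k < r l), g k)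
          + (∑ j ∈ s, ∑ l ∈ s, ∑ k ∈ K.filter (fun k => r l ≤ k ∧ k < r j), g k) := by
          rw [hA', hcount]; ring
      _ = ∑ j ∈ s, ∑ l ∈ s,
            ((∑ k ∈ K.filter (fun k => r j ≤ k ∧ k < r l), g k)
            + (∑ k ∈ K.filter (fun k => r l ≤ k ∧ k < r j), g k)) := by
          rw [← Finset.sum_add_distrib]
          exact sum_congr rfl fun j _ => (Finset.sum_add_distrib).symm
      _ ≤ ∑ j ∈ s, ∑ l ∈ s, (u j - u l) ^ 2 := by
          refine Finset.sum_le_sum fun j hj => Finset.sum_le_sum fun l hl => ?_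
          exact key2 j hj l hl
  have hmain : ∑ k ∈ K, ((s.card : ℝ) - 1) * g k
      ≤ (s.card : ℝ) * (∑ j ∈ s, u j ^ 2) - (∑ j ∈ s, u j) ^ 2 := by
    have := le_trans (by
      calc 2 * ∑ k ∈ K, ((s.card : ℝ) - 1) * g k
          ≤ 2 * ∑ k ∈ K, (a k : ℝ) * (b k : ℝ) * g k := by
            have := Finset.sum_le_sum habk
            linarith
      ) h2A
    rw [hP] at this
    linarith
  -- finish: (1/2) Σ g ≤ ((c-1)/c) Σ g = (1/c) Σ (c-1) g ≤ Σu² - (Σu)²/c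
  have hhalf : (1/2 : ℝ) * ∑ k ∈ K, g k ≤ (1 / (s.card : ℝ)) * ∑ k ∈ K, ((s.card:ℝ) - 1) * g k := by
    rw [Finset.mul_sum, Finset.mul_sum]
    refine Finset.sum_le_sum fun k _ => ?_
    have hgk2 : (0:ℝ) ≤ g k := by simp only [hg]; positivity
    have hcard2 : (2:ℝ) ≤ (s.card : ℝ) := by exact_mod_cast hc2
    rw [show (1/(s.card:ℝ)) * (((s.card:ℝ)-1)*g k) = (((s.card:ℝ)-1)*g k)/(s.card:ℝ) by ring,
      le_div_iff₀ hcpos]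
    nlinarith [mul_nonneg hgk2 (sub_nonneg.mpr hcard2)]
  calc (1 / 2) * ∑ k ∈ K, (w (k + 1) - w k) ^ 2
      ≤ (1 / (s.card : ℝ)) * ∑ k ∈ K, ((s.card:ℝ) - 1) * g k := hhalf
    _ ≤ (1 / (s.card : ℝ)) * ((s.card : ℝ) * (∑ j ∈ s, u j ^ 2) - (∑ j ∈ s, u j) ^ 2) := by
        apply mul_le_mul_of_nonneg_left hmain
        positivity
    _ = (∑ j ∈ s, u j ^ 2) - (∑ j ∈ s, u j) ^ 2 / (s.card : ℝ) := by
        field_simp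



variable {Nn : ℕ}

lemma rtg_cross {α : Type*} {Rel : α → α → Prop} {P : α → Prop} {i0 j0 : α}
    (h : Relation.ReflTransGen Rel i0 j0) (hP : P i0) (hnP : ¬ P j0) :
    ∃ a b, P a ∧ ¬ P b ∧ Rel a b := by
  revert hP
  induction h using Relation.ReflTransGen.head_induction_on with
  | refl => intro hP; exact absurd hP hnP
  | head h' htail ih =>
      rename_i a c
      intro hP
      by_cases hc : P c
      · exact ih hc
      · exact ⟨a, c, hP, hc, h'⟩

lemma invariant (Nb : ℕ → Fin Nn → Finset (Fin Nn))
    (hsym : ∀ t i j, j ∈ Nb t i ↔ i ∈ Nb t j)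
    (hself : ∀ t i, i ∈ Nb t i)
    (y : ℕ → Fin Nn → ℝ)
    (hrec : ∀ t i, y (t + 1) i = (∑ j ∈ Nb t i, y t j) / ((Nb t i).card : ℝ))
    (rk : Fin Nn → ℕ) (w : ℕ → ℝ) (hw : Monotone w)
    (T : ℕ) (hbase : ∀ i, y T i = w (rk i))
    (k tk : ℕ)
    (hnc : ∀ t, T ≤ t → t < tk → ¬ ∃ i j, rk i ≤ k ∧ k < rk j ∧ j ∈ Nb t i) :
    ∀ t, T ≤ t → t ≤ tk →
      (∀ i, rk i ≤ k → y t i ≤ w k) ∧ (∀ j, k < rk j → w (k + 1) ≤ y t j) := by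
  have main : ∀ s : ℕ, T + s ≤ tk →
      (∀ i, rk i ≤ k → y (T + s) i ≤ w k) ∧ (∀ j, k < rk j → w (k + 1) ≤ y (T + s) j) := by
    intro s
    induction s with
    | zero =>
        intro _
        constructor
        · intro i hi
          simp only [Nat.add_zero, hbase i]
          exact hw hi
        · intro j hj
          simp only [Nat.add_zero, hbase j]
          exact hw hj
    | succ s ih =>
        intro hs1
        have hs0 : T + s ≤ tk := by omega
        have hlt : T + s < tk := by omega
        obtain ⟨ih1, ih2⟩ := ih hs0
        have hnc' := hnc (T + s) (by omega) hlt
        have hTs : T + (s + 1) = (T + s) + 1 := by omega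
        have hcard : ∀ i : Fin Nn, (0:ℝ) < ((Nb (T + s) i).card : ℝ) := by
          intro i
          exact_mod_cast Finset.card_pos.mpr ⟨i, hself (T + s) i⟩
        constructor
        · intro i hi
          rw [hTs, hrec (T + s) i, div_le_iff₀ (hcard i)]
          have hall : ∀ j ∈ Nb (T + s) i, y (T + s) j ≤ w k := by
            intro j hj
            have hrkj : rk j ≤ k := by
              by_contra hcon
              exact hnc' ⟨i, j, hi, by omega, hj⟩
            exact ih1 j hrkj
          calc ∑ j ∈ Nb (T + s) i, y (T + s) j
              ≤ ∑ _j ∈ Nb (T + s) i, w k := Finset.sum_le_sum hall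
            _ = ((Nb (T + s) i).card : ℝ) * w k := by
                rw [sum_const, nsmul_eq_mul]
            _ = w k * ((Nb (T + s) i).card : ℝ) := by ring
        · intro j hj
          rw [hTs, hrec (T + s) j, le_div_iff₀ (hcard j)]
          have hall : ∀ l ∈ Nb (T + s) j, w (k + 1) ≤ y (T + s) l := by
            intro l hl
            have hrkl : k < rk l := by
              by_contra hcon
              exact hnc' ⟨l, j, by omega, hj, (hsym (T + s) j l).mp hl⟩
            exact ih2 l hrkl
          calc w (k + 1) * ((Nb (T + s) j).card : ℝ)
              = ∑ _l ∈ Nb (T + s) j, w (k + 1) := by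
                rw [sum_const, nsmul_eq_mul]; ring
            _ ≤ ∑ l ∈ Nb (T + s) j, y (T + s) l := Finset.sum_le_sum hall
  intro t ht1 ht2
  have : t = T + (t - T) := by omega
  rw [this]
  exact main (t - T) (by omega)


end BVC

open BVC

/-- Under the assumptions of the main theorem (B-connected undirected
graphs with self-loops on `n+1` nodes, degrees `d_i(t) ∈ {1, d_i}`), the weighted
variance `V'(x(t)) = Σ_i d_i (x_i(t) - x̄)²` (with `x̄` the invariant `d`-weighted
average of `x(0)`) contracts by a factor `1 - 1/(2(n+1)³)` over each block of `B` steps. -/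
theorem block_variance_contraction
    (n B : ℕ) (hB : 0 < B)
    (N : ℕ → Fin (n + 1) → Finset (Fin (n + 1))) (d : Fin (n + 1) → ℕ)
    (hsym : ∀ t i j, j ∈ N t i ↔ i ∈ N t j)
    (hself : ∀ t i, i ∈ N t i)
    (hdeg : ∀ t i, (N t i).card = d i ∨ (N t i).card = 1)
    (hBconn : ∀ m : ℕ, ∀ i j, Relation.ReflTransGen
      (fun a b => ∃ t, m * B ≤ t ∧ t < (m + 1) * B ∧ b ∈ N t a) i j)
    (x : ℕ → Fin (n + 1) → ℝ)
    (hx : ∀ t i, x (t + 1) i = (∑ j ∈ N t i, x t j) / ((N t i).card : ℝ))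
    (xbar : ℝ)
    (hxbar : xbar = (∑ i, (d i : ℝ) * x 0 i) / ∑ i, (d i : ℝ)) :
    ∀ m : ℕ,
      ∑ i, (d i : ℝ) * (x ((m + 1) * B) i - xbar) ^ 2 ≤
        (1 - 1 / (2 * (n + 1 : ℝ) ^ 3)) *
          ∑ i, (d i : ℝ) * (x (m * B) i - xbar) ^ 2 := by
  intro m
  classical
  set T := m * B with hTdef
  have hTB : (m + 1) * B = T + B := by rw [hTdef]; ring
  rw [hTB]
  -- the degenerate single-node case
  rcases Nat.eq_zero_or_pos n with hn0 | hn
  · subst hn0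
    have hsing : ∀ t (i : Fin 1), N t i = {i} := by
      intro t i
      apply Finset.eq_singleton_iff_unique_mem.mpr
      exact ⟨hself t i, fun j _ => by apply Fin.ext; omega⟩
    have hconst : ∀ t, x t 0 = x 0 0 := by
      intro t
      induction t with
      | zero => rfl
      | succ t ih => rw [hx t 0, hsing t 0]; simp [ih]
    have hzero : (d 0 : ℝ) * (x 0 0 - xbar) ^ 2 = 0 := by
      rcases eq_or_ne (d 0) 0 with h | h
      · rw [h]; simp
      · have hd : ((d 0 : ℝ)) ≠ 0 := by exact_mod_cast h
        have : xbar = x 0 0 := by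
          rw [hxbar, Fin.sum_univ_one, Fin.sum_univ_one]
          field_simp
        rw [this]; simp
    rw [Fin.sum_univ_one, Fin.sum_univ_one, hconst (T + B), hconst T, hzero]
    norm_num
  -- main case: at least two nodes
  set y : ℕ → Fin (n + 1) → ℝ := fun t i => x t i - xbar with hydef
  have hcardpos : ∀ t i, (0:ℝ) < ((N t i).card : ℝ) := by
    intro t i
    exact_mod_cast Finset.card_pos.mpr ⟨i, hself t i⟩
  have hyrec : ∀ t i, y (t + 1) i = (∑ j ∈ N t i, y t j) / ((N t i).card : ℝ) := by
    intro t i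
    have hc := (hcardpos t i).ne'
    simp only [hydef]
    rw [hx t i, Finset.sum_sub_distrib, sum_const, nsmul_eq_mul]
    field_simp
  -- every node is active at some time in the block, hence 2 ≤ d i ≤ n + 1
  have hact : ∀ i : Fin (n + 1), ∃ t, 2 ≤ (N t i).card := by
    intro i
    have hnontriv : Nontrivial (Fin (n + 1)) := by
      apply Fin.nontrivial_iff_two_le.mpr
      omega
    obtain ⟨j0, hj0⟩ := exists_ne (α := Fin (n + 1)) i
    obtain ⟨a, b, hPa, hPb, t, _, _, hmem⟩ :=
      rtg_cross (P := fun v => v = i) (hBconn m i j0) rfl hj0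
    refine ⟨t, ?_⟩
    have : ({b, a} : Finset (Fin (n+1))) ⊆ N t a := by
      intro z hz
      rcases Finset.mem_insert.mp hz with h | h
      · rwa [h]
      · rw [Finset.mem_singleton.mp h]; exact hself t a
    have hcard : ({b, a} : Finset (Fin (n+1))).card = 2 := by
      rw [Finset.card_insert_of_notMem (by simp [hPa]; exact fun h => hPb (h ▸ rfl)), Finset.card_singleton]
    calc 2 = ({b, a} : Finset (Fin (n+1))).card := hcard.symm
      _ ≤ (N t a).card := Finset.card_le_card this
      _ = (N t i).card := by rw [hPa]
  have hd2 : ∀ i, 2 ≤ d i ∧ d i ≤ n + 1 := by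
    intro i
    obtain ⟨t, h2⟩ := hact i
    rcases hdeg t i with h | h
    · constructor
      · omega
      · rw [← h]
        calc (N t i).card ≤ (univ : Finset (Fin (n+1))).card := Finset.card_le_univ _
          _ = n + 1 := by simp
    · omega
  have hSd : (0:ℝ) < ∑ i, (d i : ℝ) := by
    apply Finset.sum_pos
    · intro i _
      have := (hd2 i).1
      have : (2:ℝ) ≤ (d i : ℝ) := by exact_mod_cast this
      linarith
    · exact ⟨0, Finset.mem_univ 0⟩
  -- invariance of the weighted sum
  have hinv : ∀ t, ∑ i, (d i : ℝ) * x t i = ∑ i, (d i : ℝ) * x 0 i := by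
    intro t
    induction t with
    | zero => rfl
    | succ t ih =>
        rw [← ih]
        have per : ∀ i, (d i : ℝ) * x (t+1) i
            = (∑ j ∈ N t i, x t j) + ((d i : ℝ) - ((N t i).card : ℝ)) * x t i := by
          intro i
          rw [hx t i]
          rcases hdeg t i with h | h
          · rw [h]
            have hc := (hcardpos t i).ne'
            rw [h] at hc
            field_simp
            ring
          · have hsing : N t i = {i} := by
              rcases Finset.card_eq_one.mp h with ⟨a, ha⟩
              have hi : i ∈ ({a} : Finset (Fin (n+1))) := ha ▸ hself t i
              rw [Finset.mem_singleton] at hi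
              rw [ha, hi]
            rw [hsing]
            simp
            ring
        rw [Finset.sum_congr rfl (fun i _ => per i), Finset.sum_add_distrib,
          sum_nbhd (N t) (hsym t) (fun j => x t j), ← Finset.sum_add_distrib]
        exact Finset.sum_congr rfl fun i _ => by ring
  have hy0 : ∑ i, (d i : ℝ) * y T i = 0 := by
    have h1 : ∑ i, (d i : ℝ) * y T i
        = (∑ i, (d i : ℝ) * x T i) - (∑ i, (d i : ℝ)) * xbar := by
      simp only [hydef, mul_sub]
      rw [Finset.sum_sub_distrib, Finset.sum_mul]
    rw [h1, hinv T, hxbar]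
    field_simp
    ring
  -- sorting the initial values
  set σ : Equiv.Perm (Fin (n + 1)) := Tuple.sort (fun i => y T i) with hσdef
  have hσmono : Monotone ((fun i => y T i) ∘ σ) := Tuple.monotone_sort _
  set w : ℕ → ℝ := fun k => y T (σ ⟨min k n, by omega⟩) with hwdef
  have hw : Monotone w := by
    intro k1 k2 hk
    apply hσmono
    simp only [Fin.mk_le_mk]
    omega
  set rk : Fin (n + 1) → ℕ := fun i => ((σ.symm i : Fin (n+1)) : ℕ) with hrkdef
  have hrk_le : ∀ i, rk i ≤ n := fun i => Nat.lt_succ_iff.mp (σ.symm i).isLt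
  have hyT : ∀ i, y T i = w (rk i) := by
    intro i
    have h1 : (⟨min (rk i) n, by omega⟩ : Fin (n+1)) = σ.symm i := by
      apply Fin.ext
      simp only [hrkdef]
      omega
    simp only [hwdef]
    rw [h1, Equiv.apply_symm_apply]
  have hrkσ : ∀ p : Fin (n + 1), rk (σ p) = (p : ℕ) := by
    intro p
    simp only [hrkdef, Equiv.symm_apply_apply]
  -- crossing times
  have hex : ∀ k, k < n → ∃ t, (T ≤ t ∧ t < T + B) ∧
      ∃ i j : Fin (n+1), rk i ≤ k ∧ k < rk j ∧ j ∈ N t i := by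
    intro k hk
    have hpath := hBconn m (σ ⟨0, by omega⟩) (σ ⟨n, by omega⟩)
    have h0 : rk (σ ⟨0, by omega⟩) ≤ k := by rw [hrkσ]; simp
    have hn' : ¬ (rk (σ ⟨n, by omega⟩) ≤ k) := by rw [hrkσ]; simp; omega
    obtain ⟨a, b, hPa, hPb, t, ht1, ht2, hmem⟩ :=
      rtg_cross (P := fun v => rk v ≤ k) hpath h0 hn'
    refine ⟨t, ⟨ht1, ?_⟩, a, b, hPa, by omega, hmem⟩
    rw [hTB] at ht2
    exact ht2
  set tc : ℕ → ℕ := fun k =>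
    if h : ∃ t, (T ≤ t ∧ t < T + B) ∧
        ∃ i j : Fin (n+1), rk i ≤ k ∧ k < rk j ∧ j ∈ N t i then Nat.find h else T
    with htcdef
  have htc : ∀ k, k < n → ((T ≤ tc k ∧ tc k < T + B) ∧
      (∃ i j : Fin (n+1), rk i ≤ k ∧ k < rk j ∧ j ∈ N (tc k) i) ∧
      ∀ t, T ≤ t → t < tc k → ¬ ∃ i j : Fin (n+1), rk i ≤ k ∧ k < rk j ∧ j ∈ N t i) := by
    intro k hk
    have h := hex k hk
    simp only [htcdef, dif_pos h]
    have hspec := Nat.find_spec h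
    refine ⟨hspec.1, hspec.2, ?_⟩
    intro t ht1 ht2 hcr
    exact Nat.find_min h ht2 ⟨⟨ht1, lt_trans ht2 hspec.1.2⟩, hcr⟩
  -- the sandwich invariant up to the first crossing time
  have hInv : ∀ k, k < n → ∀ t, T ≤ t → t ≤ tc k →
      (∀ i, rk i ≤ k → y t i ≤ w k) ∧ (∀ j, k < rk j → w (k + 1) ≤ y t j) := by
    intro k hk
    exact invariant N hsym hself y hyrec rk w hw T hyT k (tc k) (htc k hk).2.2
  -- the Lyapunov function and its one-step decrease
  set V : ℕ → ℝ := fun t => ∑ i, (d i : ℝ) * (y t i)^2 with hVdef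
  have hstep : ∀ t, V t - V (t+1)
      = ∑ i, ((∑ j ∈ N t i, (y t j)^2) - (∑ j ∈ N t i, y t j)^2 / ((N t i).card : ℝ)) := by
    intro t
    have hV1 : V (t+1) = ∑ i, (d i:ℝ) * ((∑ j ∈ N t i, y t j) / ((N t i).card : ℝ))^2 :=
      Finset.sum_congr rfl fun i _ => by rw [hyrec t i]
    rw [hV1, step_identity (N t) d (hsym t) (hself t) (hdeg t) (y t)]
  -- per-time-step charge
  have hcharge : ∀ t, T ≤ t → t < T + B →
      (1/2) * ∑ k ∈ (Finset.range n).filter (fun k => tc k = t), (w (k+1) - w k)^2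
        ≤ V t - V (t+1) := by
    intro t ht1 ht2
    rw [hstep t]
    set Kt := (Finset.range n).filter (fun k => tc k = t) with hKtdef
    have hcr : ∀ k ∈ Kt, k < n ∧ tc k = t := by
      intro k hk
      rw [hKtdef, Finset.mem_filter, Finset.mem_range] at hk
      exact hk
    have hwit : ∀ k : ℕ, ∃ p : Fin (n+1) × Fin (n+1), k ∈ Kt →
        (rk p.1 ≤ k ∧ k < rk p.2 ∧ p.2 ∈ N t p.1) := by
      intro k
      by_cases hk : k ∈ Kt
      · obtain ⟨hkn, hkt⟩ := hcr k hk
        obtain ⟨i, j, h1, h2, h3⟩ := (htc k hkn).2.1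
        rw [hkt] at h3
        exact ⟨(i, j), fun _ => ⟨h1, h2, h3⟩⟩
      · exact ⟨(0, 0), fun h => absurd h hk⟩
    choose pc hpc using hwit
    have hfib : ∑ k ∈ Kt, (1/2:ℝ) * (w (k+1) - w k)^2
        = ∑ i : Fin (n+1), ∑ k ∈ Kt.filter (fun k => (pc k).1 = i),
            (1/2) * (w (k+1) - w k)^2 :=
      (Finset.sum_fiberwise_of_maps_to (fun k _ => Finset.mem_univ ((pc k).1)) _).symm
    rw [Finset.mul_sum, hfib]
    apply Finset.sum_le_sum
    intro i _
    have hKi : ∀ k ∈ Kt.filter (fun k => (pc k).1 = i), k ∈ Kt ∧ (pc k).1 = i := by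
      intro k hk
      exact Finset.mem_filter.mp hk
    have := core_charge (N t i) ⟨i, hself t i⟩ (y t) rk w hw
      (Kt.filter (fun k => (pc k).1 = i))
      (by
        intro k hk a hra
        obtain ⟨hk1, _⟩ := hKi k hk
        obtain ⟨hkn, hkt⟩ := hcr k hk1
        exact ((hInv k hkn t ht1 (le_of_eq hkt.symm)).1) a hra)
      (by
        intro k hk b hrb
        obtain ⟨hk1, _⟩ := hKi k hk
        obtain ⟨hkn, hkt⟩ := hcr k hk1
        exact ((hInv k hkn t ht1 (le_of_eq hkt.symm)).2) b hrb)
      (by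
        intro k hk
        obtain ⟨hk1, hpci⟩ := hKi k hk
        obtain ⟨h1, h2, h3⟩ := hpc k hk1
        exact ⟨i, hself t i, by rw [← hpci]; exact h1⟩)
      (by
        intro k hk
        obtain ⟨hk1, hpci⟩ := hKi k hk
        obtain ⟨h1, h2, h3⟩ := hpc k hk1
        exact ⟨(pc k).2, by rw [← hpci]; exact h3, h2⟩)
    calc ∑ k ∈ Kt.filter (fun k => (pc k).1 = i), (1/2:ℝ) * (w (k+1) - w k)^2
        = (1/2) * ∑ k ∈ Kt.filter (fun k => (pc k).1 = i), (w (k+1) - w k)^2 := by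
          rw [Finset.mul_sum]
      _ ≤ _ := this
  -- total decrease over the block
  have htotal : (1/2) * ∑ k ∈ Finset.range n, (w (k+1) - w k)^2 ≤ V T - V (T + B) := by
    have h2 : ∑ k ∈ Finset.range n, (1/2:ℝ) * (w (k+1) - w k)^2
        = ∑ t ∈ Finset.Ico T (T+B), ∑ k ∈ (Finset.range n).filter (fun k => tc k = t),
            (1/2) * (w (k+1) - w k)^2 := by
      apply (Finset.sum_fiberwise_of_maps_to ?_ _).symm
      intro k hk
      rw [Finset.mem_range] at hk
      rw [Finset.mem_Ico]
      exact ⟨(htc k hk).1.1, (htc k hk).1.2⟩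
    have h3 : ∑ t ∈ Finset.Ico T (T+B), ∑ k ∈ (Finset.range n).filter (fun k => tc k = t),
            (1/2:ℝ) * (w (k+1) - w k)^2
        ≤ ∑ t ∈ Finset.Ico T (T+B), (V t - V (t+1)) := by
      apply Finset.sum_le_sum
      intro t ht
      rw [Finset.mem_Ico] at ht
      have := hcharge t ht.1 ht.2
      rw [Finset.mul_sum] at this
      exact this
    have h4 : ∑ t ∈ Finset.Ico T (T+B), (V t - V (t+1)) = V T - V (T + B) := by
      rw [Finset.sum_Ico_eq_sum_range]
      have he : ∀ i ∈ Finset.range (T + B - T), V (T + i) - V (T + i + 1)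
          = (fun s => V (T + s)) i - (fun s => V (T + s)) (i + 1) := by
        intro i _
        have : T + i + 1 = T + (i + 1) := by omega
        rw [this]
      rw [Finset.sum_congr rfl he, Finset.sum_range_sub' (fun s => V (T + s))]
      have : T + (T + B - T) = T + B := by omega
      rw [this]
      simp
    rw [Finset.mul_sum, h2]
    rw [← h4]
    exact h3
  -- final arithmetic
  set S2 := ∑ k ∈ Finset.range n, (w (k+1) - w k)^2 with hS2def
  have hspan : ∑ k ∈ Finset.range n, (w (k+1) - w k) = w n - w 0 :=
    Finset.sum_range_sub w n
  have hw0 : w 0 ≤ 0 := by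
    by_contra hcon
    push_neg at hcon
    have hge : ∀ i, w 0 ≤ y T i := fun i => by
      rw [hyT i]; exact hw (Nat.zero_le _)
    have : (∑ i, (d i:ℝ)) * w 0 ≤ ∑ i, (d i : ℝ) * y T i := by
      rw [Finset.sum_mul]
      apply Finset.sum_le_sum
      intro i _
      exact mul_le_mul_of_nonneg_left (hge i) (by positivity)
    rw [hy0] at this
    nlinarith
  have hwn : 0 ≤ w n := by
    by_contra hcon
    push_neg at hcon
    have hle : ∀ i, y T i ≤ w n := fun i => by
      rw [hyT i]; exact hw (hrk_le i)
    have : ∑ i, (d i : ℝ) * y T i ≤ (∑ i, (d i:ℝ)) * w n := by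
      rw [Finset.sum_mul]
      apply Finset.sum_le_sum
      intro i _
      exact mul_le_mul_of_nonneg_left (hle i) (by positivity)
    rw [hy0] at this
    nlinarith
  have hyb : ∀ i, (y T i)^2 ≤ (w n - w 0)^2 := by
    intro i
    have h1 : w 0 ≤ y T i := by rw [hyT i]; exact hw (Nat.zero_le _)
    have h2 : y T i ≤ w n := by rw [hyT i]; exact hw (hrk_le i)
    apply sq_le_sq'
    · linarith
    · linarith
  have hVT : V T ≤ ((n:ℝ)+1)^2 * (w n - w 0)^2 := by
    have : ∀ i : Fin (n+1), (d i : ℝ) * (y T i)^2 ≤ ((n:ℝ)+1) * (w n - w 0)^2 := by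
      intro i
      have hdle : (d i : ℝ) ≤ (n:ℝ)+1 := by exact_mod_cast (hd2 i).2
      calc (d i : ℝ) * (y T i)^2 ≤ ((n:ℝ)+1) * (y T i)^2 :=
            mul_le_mul_of_nonneg_right hdle (sq_nonneg _)
        _ ≤ ((n:ℝ)+1) * (w n - w 0)^2 :=
            mul_le_mul_of_nonneg_left (hyb i) (by positivity)
    calc V T ≤ ∑ _i : Fin (n+1), ((n:ℝ)+1) * (w n - w 0)^2 := Finset.sum_le_sum fun i _ => this i
      _ = ((n:ℝ)+1)^2 * (w n - w 0)^2 := by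
          rw [Finset.sum_const]
          simp [Finset.card_univ]
          ring
  have hCS : (w n - w 0)^2 ≤ (n:ℝ) * S2 := by
    rw [← hspan, hS2def]
    have := sq_sum_le_card_mul_sum_sq (s := Finset.range n) (f := fun k => w (k+1) - w k)
    simpa using this
  have hVTpos : 0 ≤ V T := Finset.sum_nonneg fun i _ => by positivity
  have hS2pos : 0 ≤ S2 := Finset.sum_nonneg fun k _ => sq_nonneg _
  have hDpos : 0 ≤ V T - V (T+B) := by linarith
  have hkey : V T ≤ 2 * ((n:ℝ)+1)^3 * (V T - V (T+B)) := by
    have hn1 : (1:ℝ) ≤ (n:ℝ) := by exact_mod_cast hn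
    calc V T ≤ ((n:ℝ)+1)^2 * (w n - w 0)^2 := hVT
      _ ≤ ((n:ℝ)+1)^2 * ((n:ℝ) * S2) := mul_le_mul_of_nonneg_left hCS (by positivity)
      _ ≤ ((n:ℝ)+1)^2 * ((n:ℝ) * (2 * (V T - V (T+B)))) := by
          apply mul_le_mul_of_nonneg_left _ (by positivity)
          apply mul_le_mul_of_nonneg_left _ (by positivity)
          linarith
      _ ≤ 2 * ((n:ℝ)+1)^3 * (V T - V (T+B)) := by
          nlinarith
  -- conclude
  have hgoal : V (T + B) ≤ (1 - 1 / (2 * ((n:ℝ) + 1) ^ 3)) * V T := by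
    have hpos3 : (0:ℝ) < 2 * ((n:ℝ)+1)^3 := by positivity
    have hdiv : V T / (2 * ((n:ℝ)+1)^3) ≤ V T - V (T+B) := by
      rw [div_le_iff₀ hpos3]
      calc V T ≤ 2 * ((n:ℝ)+1)^3 * (V T - V (T+B)) := hkey
        _ = (V T - V (T+B)) * (2 * ((n:ℝ)+1)^3) := by ring
    have : (1 - 1 / (2 * ((n:ℝ) + 1) ^ 3)) * V T = V T - V T / (2 * ((n:ℝ)+1)^3) := by
      ring
    rw [this]
    linarith
  calc ∑ i, (d i : ℝ) * (x (T + B) i - xbar) ^ 2 = V (T + B) := by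
        rw [hVdef]
    _ ≤ (1 - 1 / (2 * ((n:ℝ) + 1) ^ 3)) * V T := hgoal
    _ = (1 - 1 / (2 * ((n:ℝ) + 1) ^ 3)) * ∑ i, (d i : ℝ) * (x T i - xbar) ^ 2 := by
        rw [hVdef]
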